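/- Let k ≥ 1 and q_1,…,q_k ≥ 1, and let Q = [q_1]×···×[q_k]. Let (μ_{i,σ})_{i∈[k],σ∈[q_i]} be real numbers with μ_{i,σ} ≥ 0 and Σ_{σ∈[q_i]} μ_{i,σ} = 1 for every i ∈ [k]. Then there exists a unique probability distribution D on Q such that supp(D) is a chain and Pr_{a∼D}[a_i = σ] = μ_{i,σ} for all i ∈ [k] and σ ∈ [q_i]. -/

import Mathlib

open scoped Classical

/-- `D` is a probability distribution on the finite type `Ω`. -/
def IsDist {Ω : Type*} [Fintype Ω] (D : Ω → ℝ) : Prop :=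
  (∀ x, 0 ≤ D x) ∧ ∑ x, D x = 1

section Aux

open Finset MeasureTheory

variable {k : ℕ} {q : Fin k → ℕ} (μ : (i : Fin k) → Fin (q i) → ℝ)

/-- Cumulative distribution function of the `i`-th marginal. -/
noncomputable def cdf (i : Fin k) (σ : Fin (q i)) : ℝ :=
  ∑ τ ∈ Finset.univ.filter (· ≤ σ), μ i τ

/-- Strict cumulative distribution function of the `i`-th marginal. -/
noncomputable def lcdf (i : Fin k) (σ : Fin (q i)) : ℝ :=
  ∑ τ ∈ Finset.univ.filter (· < σ), μ i τ

lemma lcdf_nonneg (hμ0 : ∀ i σ, 0 ≤ μ i σ) (i : Fin k) (σ : Fin (q i)) :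
    0 ≤ lcdf μ i σ :=
  Finset.sum_nonneg fun τ _ => hμ0 i τ

lemma cdf_eq_lcdf_add (i : Fin k) (σ : Fin (q i)) :
    cdf μ i σ = lcdf μ i σ + μ i σ := by
  have h : Finset.univ.filter (· ≤ σ) = insert σ (Finset.univ.filter (· < σ)) := by
    ext τ; simp [le_iff_lt_or_eq, or_comm]
  rw [cdf, h, Finset.sum_insert (by simp), lcdf]; ring

lemma lcdf_le_cdf (hμ0 : ∀ i σ, 0 ≤ μ i σ) (i : Fin k) (σ : Fin (q i)) :
    lcdf μ i σ ≤ cdf μ i σ := by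
  rw [cdf_eq_lcdf_add]; linarith [hμ0 i σ]

lemma cdf_le_one (hμ0 : ∀ i σ, 0 ≤ μ i σ) (hμ1 : ∀ i, ∑ σ, μ i σ = 1)
    (i : Fin k) (σ : Fin (q i)) : cdf μ i σ ≤ 1 := by
  rw [← hμ1 i]
  exact Finset.sum_le_sum_of_subset_of_nonneg (Finset.subset_univ _)
    (fun τ _ _ => hμ0 i τ)

lemma cdf_le_lcdf_of_lt (hμ0 : ∀ i σ, 0 ≤ μ i σ) (i : Fin k) {σ' σ : Fin (q i)}
    (h : σ' < σ) : cdf μ i σ' ≤ lcdf μ i σ := by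
  apply Finset.sum_le_sum_of_subset_of_nonneg
  · intro τ hτ
    simp only [Finset.mem_filter, Finset.mem_univ, true_and] at hτ ⊢
    exact lt_of_le_of_lt hτ h
  · exact fun τ _ _ => hμ0 i τ

/-- Quantile function for the `i`-th marginal. -/
noncomputable def quant (hq : ∀ i, 1 ≤ q i) (i : Fin k) (t : ℝ) : Fin (q i) :=
  if h : (Finset.univ.filter fun σ => t < cdf μ i σ).Nonempty then
    (Finset.univ.filter fun σ => t < cdf μ i σ).min' h
  else ⟨0, hq i⟩

lemma quant_filter_nonempty (hμ1 : ∀ i, ∑ σ, μ i σ = 1) (hq : ∀ i, 1 ≤ q i)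
    (i : Fin k) {t : ℝ} (ht1 : t < 1) :
    (Finset.univ.filter fun σ => t < cdf μ i σ).Nonempty := by
  refine ⟨⟨q i - 1, by have := hq i; omega⟩, ?_⟩
  simp only [Finset.mem_filter, Finset.mem_univ, true_and]
  have h : cdf μ i ⟨q i - 1, by have := hq i; omega⟩ = 1 := by
    rw [← hμ1 i, cdf]
    congr 1
    ext τ
    simp only [Finset.mem_filter, Finset.mem_univ, true_and, iff_true]
    exact Fin.le_def.mpr (by have := τ.isLt; simp; omega)
  rw [h]; exact ht1

lemma quant_eq_iff (hμ0 : ∀ i σ, 0 ≤ μ i σ) (hμ1 : ∀ i, ∑ σ, μ i σ = 1)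
    (hq : ∀ i, 1 ≤ q i) (i : Fin k) (σ : Fin (q i)) {t : ℝ}
    (ht0 : 0 ≤ t) (ht1 : t < 1) :
    quant μ hq i t = σ ↔ lcdf μ i σ ≤ t ∧ t < cdf μ i σ := by
  have hne := quant_filter_nonempty μ hμ1 hq i ht1
  rw [quant, dif_pos hne]
  constructor
  · rintro rfl
    have hmem := Finset.min'_mem _ hne
    simp only [Finset.mem_filter, Finset.mem_univ, true_and] at hmem
    refine ⟨?_, hmem⟩
    by_contra h
    push_neg at h
    set σm := (Finset.univ.filter fun σ => t < cdf μ i σ).min' hne with hσm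
    have hpos : 0 < (σm : ℕ) := by
      by_contra h0
      push_neg at h0
      have hz : lcdf μ i σm = 0 := by
        rw [lcdf]
        apply Finset.sum_eq_zero
        intro τ hτ
        simp only [Finset.mem_filter, Finset.mem_univ, true_and] at hτ
        exact absurd (Fin.lt_def.mp hτ) (by omega)
      rw [hz] at h
      linarith
    have hlt : (σm : ℕ) - 1 < q i := by have := σm.isLt; omega
    have hcs : cdf μ i ⟨(σm : ℕ) - 1, hlt⟩ = lcdf μ i σm := by
      rw [cdf, lcdf]
      congr 1
      ext τ
      simp only [Finset.mem_filter, Finset.mem_univ, true_and, Fin.le_def, Fin.lt_def]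
      omega
    have hmem' : (⟨(σm : ℕ) - 1, hlt⟩ : Fin (q i)) ∈
        Finset.univ.filter fun σ => t < cdf μ i σ := by
      simp only [Finset.mem_filter, Finset.mem_univ, true_and]
      rw [hcs]; exact h
    have hle := Finset.min'_le _ _ hmem'
    rw [← hσm] at hle
    have h2 := Fin.le_def.mp hle
    simp only at h2
    omega
  · rintro ⟨hl, hu⟩
    have hmemσ : σ ∈ Finset.univ.filter fun σ => t < cdf μ i σ := by
      simp only [Finset.mem_filter, Finset.mem_univ, true_and]; exact hu
    refine le_antisymm (Finset.min'_le _ _ hmemσ) ?_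
    by_contra h
    push_neg at h
    have hmem := Finset.min'_mem _ hne
    simp only [Finset.mem_filter, Finset.mem_univ, true_and] at hmem
    have := cdf_le_lcdf_of_lt μ hμ0 i h
    linarith

lemma quant_self (hμ0 : ∀ i σ, 0 ≤ μ i σ) (hμ1 : ∀ i, ∑ σ, μ i σ = 1)
    (hq : ∀ i, 1 ≤ q i) (i : Fin k) {t : ℝ} (ht0 : 0 ≤ t) (ht1 : t < 1) :
    lcdf μ i (quant μ hq i t) ≤ t ∧ t < cdf μ i (quant μ hq i t) :=
  (quant_eq_iff μ hμ0 hμ1 hq i _ ht0 ht1).mp rfl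

lemma quant_mono (hμ0 : ∀ i σ, 0 ≤ μ i σ) (hμ1 : ∀ i, ∑ σ, μ i σ = 1)
    (hq : ∀ i, 1 ≤ q i) (i : Fin k) {s t : ℝ}
    (hs0 : 0 ≤ s) (hst : s ≤ t) (ht1 : t < 1) :
    quant μ hq i s ≤ quant μ hq i t := by
  have h1 := quant_self μ hμ0 hμ1 hq i (le_trans hs0 hst) ht1
  have h2 := quant_self μ hμ0 hμ1 hq i hs0 (lt_of_le_of_lt hst ht1)
  by_contra h
  push_neg at h
  have := cdf_le_lcdf_of_lt μ hμ0 i h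
  linarith [h1.2, h2.1]

end Aux

section Uniq

open Finset

variable {k : ℕ} {q : Fin k → ℕ} (μ : (i : Fin k) → Fin (q i) → ℝ)

/-- The cumulative marginal condition. -/
lemma marg_cum {D : ((i : Fin k) → Fin (q i)) → ℝ}
    (hmarg : ∀ (i : Fin k) (σ : Fin (q i)),
      (∑ a : (i : Fin k) → Fin (q i), if a i = σ then D a else 0) = μ i σ)
    (i : Fin k) (s : Fin (q i)) :
    ∑ x ∈ Finset.univ.filter (fun x => x i ≤ s), D x = cdf μ i s := by
  rw [cdf]
  have h : ∀ σ ∈ Finset.univ.filter (· ≤ s), μ i σ =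
      ∑ a : (i : Fin k) → Fin (q i), if a i = σ then D a else 0 :=
    fun σ _ => (hmarg i σ).symm
  rw [Finset.sum_congr rfl h, Finset.sum_comm, Finset.sum_filter]
  apply Finset.sum_congr rfl
  intro a _
  rw [Finset.sum_ite_eq (Finset.univ.filter (· ≤ s)) (a i) (fun _ => D a)]
  simp

/-- For a chain-supported distribution with the given marginals, the cumulative
sums are determined by the marginals. -/
lemma cum_eq (hk : 1 ≤ k) (hμ0 : ∀ i σ, 0 ≤ μ i σ)
    {D : ((i : Fin k) → Fin (q i)) → ℝ}
    (hD : IsDist D) (hchain : IsChain (· ≤ ·) {a | D a ≠ 0})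
    (hmarg : ∀ (i : Fin k) (σ : Fin (q i)),
      (∑ a : (i : Fin k) → Fin (q i), if a i = σ then D a else 0) = μ i σ)
    (a : (i : Fin k) → Fin (q i)) :
    haveI : Nonempty (Fin k) := ⟨⟨0, hk⟩⟩
    ∑ x ∈ Finset.univ.filter (· ≤ a), D x =
      Finset.univ.inf' Finset.univ_nonempty (fun i => cdf μ i (a i)) := by
  haveI : Nonempty (Fin k) := ⟨⟨0, hk⟩⟩
  set T : Fin k → Finset ((i : Fin k) → Fin (q i)) :=
    fun i => Finset.univ.filter (fun x => x i ≤ a i ∧ D x ≠ 0) with hT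
  have hTmem : ∀ i x, x ∈ T i ↔ (x i ≤ a i ∧ D x ≠ 0) := by
    intro i x
    simp only [hT, Finset.mem_filter, Finset.mem_univ, true_and]
  have hTsum : ∀ i, ∑ x ∈ T i, D x = cdf μ i (a i) := by
    intro i
    rw [← marg_cum μ hmarg i (a i)]
    show ∑ x ∈ Finset.univ.filter (fun x => x i ≤ a i ∧ D x ≠ 0), D x = _
    rw [show (Finset.univ.filter (fun x => x i ≤ a i ∧ D x ≠ 0)) =
      (Finset.univ.filter (fun x => x i ≤ a i)).filter (fun x => D x ≠ 0) from by
        rw [Finset.filter_filter]]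
    exact Finset.sum_filter_ne_zero _
  have htot : ∀ i j, T i ⊆ T j ∨ T j ⊆ T i := by
    intro i j
    by_cases hij : T i ⊆ T j
    · exact Or.inl hij
    · right
      rw [Finset.not_subset] at hij
      obtain ⟨x, hxi, hxj⟩ := hij
      rw [hTmem] at hxi
      rw [hTmem] at hxj
      intro y hy
      rw [hTmem] at hy
      rw [hTmem]
      refine ⟨?_, hy.2⟩
      by_cases hxy : x = y
      · exact absurd ⟨hxy ▸ hy.1, hxi.2⟩ hxj
      · rcases hchain hxi.2 hy.2 hxy with h | h
        · exact absurd ⟨le_trans (h j) hy.1, hxi.2⟩ hxj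
        · exact le_trans (h i) hxi.1
  obtain ⟨i₀, -, hmin⟩ := Finset.exists_min_image Finset.univ (fun i => (T i).card)
    Finset.univ_nonempty
  have hsub : ∀ i, T i₀ ⊆ T i := by
    intro i
    rcases htot i₀ i with h | h
    · exact h
    · rw [Finset.eq_of_subset_of_card_le h (hmin i (Finset.mem_univ i))]
  have hfe : (Finset.univ.filter (· ≤ a)).filter (fun x => D x ≠ 0) = T i₀ := by
    ext x
    rw [hTmem]
    simp only [Finset.mem_filter, Finset.mem_univ, true_and]
    constructor
    · rintro ⟨hxa, hx0⟩
      exact ⟨hxa i₀, hx0⟩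
    · rintro ⟨hxi, hx0⟩
      refine ⟨fun i => ?_, hx0⟩
      have hx : x ∈ T i₀ := (hTmem i₀ x).mpr ⟨hxi, hx0⟩
      exact ((hTmem i x).mp (hsub i hx)).1
  have hsum_eq : ∑ x ∈ Finset.univ.filter (· ≤ a), D x = ∑ x ∈ T i₀, D x := by
    rw [← hfe]
    exact (Finset.sum_filter_ne_zero _).symm
  rw [hsum_eq, hTsum i₀]
  refine le_antisymm (Finset.le_inf' _ _ fun i _ => ?_)
    (Finset.inf'_le _ (Finset.mem_univ i₀))
  rw [← hTsum i, ← hTsum i₀]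
  exact Finset.sum_le_sum_of_subset_of_nonneg (hsub i) (fun x _ _ => hD.1 x)

/-- Two functions with the same cumulative sums on a finite partial order agree. -/
lemma eq_of_cum {Ω : Type*} [Fintype Ω] [PartialOrder Ω] {D D' : Ω → ℝ}
    (h : ∀ a, ∑ x ∈ Finset.univ.filter (· ≤ a), D x =
      ∑ x ∈ Finset.univ.filter (· ≤ a), D' x) : D = D' := by
  funext a
  refine IsWellFounded.induction (motive := fun a => D a = D' a) ((· < ·) : Ω → Ω → Prop) a ?_
  intro x IH
  have hins : Finset.univ.filter (· ≤ x) = insert x (Finset.univ.filter (· < x)) := by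
    ext y; simp [le_iff_lt_or_eq, or_comm]
  have hx := h x
  rw [hins, Finset.sum_insert (by simp), Finset.sum_insert (by simp)] at hx
  have hIH : ∑ y ∈ Finset.univ.filter (· < x), D y =
      ∑ y ∈ Finset.univ.filter (· < x), D' y :=
    Finset.sum_congr rfl fun y hy => IH y (by simpa using hy)
  linarith

end Uniq

open Finset MeasureTheory in
/-- Lemma 7.1 of the paper (canonical distribution): given a vector of marginals, there is
a unique distribution on `[q₁] × ⋯ × [q_k]` with these marginals whose support is a chain
in the coordinatewise partial order. -/
theorem exists_unique_chain_distribution (k : ℕ) (hk : 1 ≤ k) (q : Fin k → ℕ)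
    (hq : ∀ i, 1 ≤ q i)
    (μ : (i : Fin k) → Fin (q i) → ℝ)
    (hμ0 : ∀ i σ, 0 ≤ μ i σ) (hμ1 : ∀ i, ∑ σ, μ i σ = 1) :
    ∃! D : ((i : Fin k) → Fin (q i)) → ℝ,
      IsDist D ∧ IsChain (· ≤ ·) {a | D a ≠ 0} ∧
      ∀ (i : Fin k) (σ : Fin (q i)),
        (∑ a : (i : Fin k) → Fin (q i), if a i = σ then D a else 0) = μ i σ := by
  classical
  haveI : Nonempty (Fin k) := ⟨⟨0, hk⟩⟩
  set A : ((i : Fin k) → Fin (q i)) → Set ℝ :=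
    fun a => Set.Ico (0:ℝ) 1 ∩ {t | ∀ i, quant μ hq i t = a i} with hA
  set D : ((i : Fin k) → Fin (q i)) → ℝ := fun a => (volume (A a)).toReal with hD
  have hAmem : ∀ a t, t ∈ A a ↔ ((0 ≤ t ∧ t < 1) ∧ ∀ i, quant μ hq i t = a i) := by
    intro a t
    simp only [hA, Set.mem_inter_iff, Set.mem_Ico, Set.mem_setOf_eq]
  have hAeq : ∀ a, A a = ⋂ i, (Set.Ico (0:ℝ) 1 ∩
      Set.Ico (lcdf μ i (a i)) (cdf μ i (a i))) := by
    intro a; ext t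
    rw [hAmem]
    simp only [Set.mem_iInter, Set.mem_inter_iff, Set.mem_Ico]
    constructor
    · rintro ⟨⟨h0, h1⟩, hqt⟩ i
      exact ⟨⟨h0, h1⟩, (quant_eq_iff μ hμ0 hμ1 hq i (a i) h0 h1).mp (hqt i)⟩
    · intro h
      obtain ⟨⟨h0, h1⟩, -⟩ := h (Classical.arbitrary (Fin k))
      exact ⟨⟨h0, h1⟩, fun i => (quant_eq_iff μ hμ0 hμ1 hq i (a i) h0 h1).mpr (h i).2⟩
  have hAmeas : ∀ a, MeasurableSet (A a) := fun a => by
    rw [hAeq]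
    exact MeasurableSet.iInter fun i => measurableSet_Ico.inter measurableSet_Ico
  have hAsub : ∀ a, A a ⊆ Set.Ico (0:ℝ) 1 := fun a => Set.inter_subset_left
  have hfin : ∀ a, volume (A a) ≠ ⊤ := fun a =>
    ne_of_lt (lt_of_le_of_lt (measure_mono (hAsub a))
      (by rw [Real.volume_Ico]; exact ENNReal.ofReal_lt_top))
  have hAdisj : Set.PairwiseDisjoint (↑(Finset.univ : Finset ((i : Fin k) → Fin (q i)))) A := by
    intro a _ b _ hab
    refine Set.disjoint_left.mpr fun t hta htb => hab ?_
    rw [hAmem] at hta htb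
    funext i
    exact (hta.2 i).symm.trans (htb.2 i)
  have hAunion : ⋃ a ∈ (Finset.univ : Finset ((i : Fin k) → Fin (q i))), A a
      = Set.Ico (0:ℝ) 1 := by
    apply Set.Subset.antisymm
    · simp only [Set.iUnion_subset_iff]
      intro a _
      exact hAsub a
    · intro t ht
      refine Set.mem_iUnion₂.mpr ⟨fun i => quant μ hq i t, Finset.mem_univ _, ?_⟩
      rw [hAmem]
      exact ⟨⟨ht.1, ht.2⟩, fun i => rfl⟩
  have hsum : ∑ a, D a = 1 := by
    have hb := measure_biUnion_finset (μ := volume) hAdisj (fun a _ => hAmeas a)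
    rw [hAunion] at hb
    calc ∑ a, D a = (∑ a, volume (A a)).toReal :=
          (ENNReal.toReal_sum fun a _ => hfin a).symm
      _ = (volume (Set.Ico (0:ℝ) 1)).toReal := by rw [← hb]
      _ = 1 := by rw [Real.volume_Ico]; norm_num
  have hmarg : ∀ (i : Fin k) (σ : Fin (q i)),
      (∑ a : (i : Fin k) → Fin (q i), if a i = σ then D a else 0) = μ i σ := by
    intro i σ
    rw [← Finset.sum_filter]
    have hU : ⋃ a ∈ Finset.univ.filter (fun a : (i : Fin k) → Fin (q i) => a i = σ), A a
        = Set.Ico (lcdf μ i σ) (cdf μ i σ) := by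
      apply Set.Subset.antisymm
      · simp only [Set.iUnion_subset_iff]
        intro a ha t hta
        simp only [Finset.mem_filter] at ha
        rw [hAmem] at hta
        have h := (quant_eq_iff μ hμ0 hμ1 hq i (a i) hta.1.1 hta.1.2).mp (hta.2 i)
        rw [ha.2] at h
        exact h
      · intro t ht
        have h0 : 0 ≤ t := le_trans (lcdf_nonneg μ hμ0 i σ) ht.1
        have h1 : t < 1 := lt_of_lt_of_le ht.2 (cdf_le_one μ hμ0 hμ1 i σ)
        refine Set.mem_iUnion₂.mpr ⟨fun j => quant μ hq j t, ?_, ?_⟩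
        · simp only [Finset.mem_filter, Finset.mem_univ, true_and]
          exact (quant_eq_iff μ hμ0 hμ1 hq i σ h0 h1).mpr ⟨ht.1, ht.2⟩
        · rw [hAmem]
          exact ⟨⟨h0, h1⟩, fun j => rfl⟩
    have hdisj' := hAdisj.subset (Finset.coe_subset.mpr
      (Finset.filter_subset (fun a : (i : Fin k) → Fin (q i) => a i = σ) Finset.univ))
    calc ∑ a ∈ Finset.univ.filter (fun a => a i = σ), D a
        = (∑ a ∈ Finset.univ.filter (fun a => a i = σ), volume (A a)).toReal :=
          (ENNReal.toReal_sum fun a _ => hfin a).symm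
      _ = (volume (⋃ a ∈ Finset.univ.filter (fun a => a i = σ), A a)).toReal := by
          rw [measure_biUnion_finset (μ := volume) hdisj' (fun a _ => hAmeas a)]
      _ = (volume (Set.Ico (lcdf μ i σ) (cdf μ i σ))).toReal := by rw [hU]
      _ = μ i σ := by
          rw [Real.volume_Ico, ENNReal.toReal_ofReal
            (sub_nonneg.mpr (lcdf_le_cdf μ hμ0 i σ))]
          rw [cdf_eq_lcdf_add]; ring
  have hchain : IsChain (· ≤ ·) {a | D a ≠ 0} := by
    intro a ha b hb hab
    have hA_ne : ∀ c, D c ≠ 0 → (A c).Nonempty := by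
      intro c hc
      rw [Set.nonempty_iff_ne_empty]
      intro he
      exact hc (by simp [hD, he])
    obtain ⟨s, hs⟩ := hA_ne a ha
    obtain ⟨t, ht⟩ := hA_ne b hb
    rw [hAmem] at hs ht
    rcases le_total s t with h | h
    · left
      intro i
      rw [← hs.2 i, ← ht.2 i]
      exact quant_mono μ hμ0 hμ1 hq i hs.1.1 h ht.1.2
    · right
      intro i
      rw [← ht.2 i, ← hs.2 i]
      exact quant_mono μ hμ0 hμ1 hq i ht.1.1 h hs.1.2
  have hDdist : IsDist D := ⟨fun a => ENNReal.toReal_nonneg, hsum⟩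
  refine ⟨D, ⟨hDdist, hchain, hmarg⟩, ?_⟩
  rintro D' ⟨hD'dist, hD'chain, hD'marg⟩
  have h1 := cum_eq μ hk hμ0 hD'dist hD'chain hD'marg
  have h2 := cum_eq μ hk hμ0 hDdist hchain hmarg
  exact eq_of_cum (fun a => (h1 a).trans (h2 a).symm)
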